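/- arXiv:1909.11131 — 3 statements merged into one kernel-verified Lean document; each statement's English description precedes it below -/
import Mathlib

section
/- For unitary operators U, V on a finite-dimensional complex Hilbert space, d(U,V) = 1 if and only if there exists a unit vector α such that Uα and Vα are orthogonal, where d(U,V) = sup_{‖ψ‖=1} (1 − |⟨ψ|U†V|ψ⟩|²)^{1/2}. -/
open Matrix

/-- The pseudometric `d_ψ(U,V) = (1 − |⟨ψ|U†V|ψ⟩|²)^{1/2}`. -/
noncomputable def dpsi {ι : Type*} [Fintype ι] (ψ : ι → ℂ) (U V : Matrix ι ι ℂ) : ℝ :=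
  Real.sqrt (1 - ‖star ψ ⬝ᵥ (Uᴴ * V).mulVec ψ‖ ^ 2)

/-- The distance `d(U,V) = sup_{‖ψ‖=1} (1 − |⟨ψ|U†V|ψ⟩|²)^{1/2}` on unitaries. -/
noncomputable def dU {ι : Type*} [Fintype ι] (U V : Matrix ι ι ℂ) : ℝ :=
  ⨆ ψ : {ψ : ι → ℂ // star ψ ⬝ᵥ ψ = 1}, dpsi ψ.1 U V

lemma dpsi_le_one {ι : Type*} [Fintype ι] (ψ : ι → ℂ) (U V : Matrix ι ι ℂ) :
    dpsi ψ U V ≤ 1 := by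
  unfold dpsi
  calc Real.sqrt (1 - ‖star ψ ⬝ᵥ (Uᴴ * V).mulVec ψ‖ ^ 2)
      ≤ Real.sqrt 1 := Real.sqrt_le_sqrt (by nlinarith [sq_nonneg (‖star ψ ⬝ᵥ (Uᴴ * V).mulVec ψ‖)])
    _ = 1 := Real.sqrt_one

lemma orth_key {n : ℕ} (U V : Matrix (Fin n) (Fin n) ℂ) (α : Fin n → ℂ) :
    star (U.mulVec α) ⬝ᵥ (V.mulVec α) = star α ⬝ᵥ (Uᴴ * V).mulVec α := by
  rw [star_mulVec, dotProduct_mulVec, dotProduct_mulVec, vecMul_vecMul]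

theorem dU_eq_one_iff {n : ℕ} (U V : Matrix (Fin n) (Fin n) ℂ)
    (hU : U ∈ Matrix.unitaryGroup (Fin n) ℂ) (hV : V ∈ Matrix.unitaryGroup (Fin n) ℂ) :
    dU U V = 1 ↔
      ∃ α : Fin n → ℂ, star α ⬝ᵥ α = 1 ∧ star (U.mulVec α) ⬝ᵥ (V.mulVec α) = 0 := by
  set W := Uᴴ * V with hW
  set f : (Fin n → ℂ) → ℝ := fun ψ => ‖star ψ ⬝ᵥ W.mulVec ψ‖ with hf
  have hdpsi : ∀ ψ : Fin n → ℂ, dpsi ψ U V = Real.sqrt (1 - f ψ ^ 2) := fun ψ => rfl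
  have hbdd : BddAbove (Set.range fun ψ : {ψ : Fin n → ℂ // star ψ ⬝ᵥ ψ = 1} => dpsi ψ.1 U V) := by
    refine ⟨1, ?_⟩
    rintro x ⟨ψ, rfl⟩
    exact dpsi_le_one _ _ _
  constructor
  · intro h1
    -- the sphere is nonempty, else dU = 0
    by_cases hne : Nonempty {ψ : Fin n → ℂ // star ψ ⬝ᵥ ψ = 1}
    · -- compactness of the sphere
      set S : Set (Fin n → ℂ) := {ψ | star ψ ⬝ᵥ ψ = 1} with hS
      have hSne : S.Nonempty := ⟨hne.some.1, hne.some.2⟩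
      have hclosed : IsClosed S := by
        have hc : Continuous fun ψ : Fin n → ℂ => star ψ ⬝ᵥ ψ := by
          simp only [dotProduct, Pi.star_apply]; fun_prop
        exact isClosed_eq hc continuous_const
      have hbound : S ⊆ Metric.closedBall 0 1 := by
        intro ψ h
        have h2 : ∑ i, (Complex.normSq (ψ i) : ℂ) = 1 := by
          simpa [dotProduct, Complex.normSq_eq_conj_mul_self] using (show star ψ ⬝ᵥ ψ = 1 from h)
        have h3 : ∑ i, Complex.normSq (ψ i) = 1 := by exact_mod_cast h2
        simp only [Metric.mem_closedBall, dist_zero_right]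
        rw [pi_norm_le_iff_of_nonneg zero_le_one]
        intro i
        have hle : Complex.normSq (ψ i) ≤ 1 := by
          rw [← h3]
          exact Finset.single_le_sum (fun j _ => Complex.normSq_nonneg _) (Finset.mem_univ i)
        have h4 : ‖ψ i‖ ^ 2 = Complex.normSq (ψ i) := Complex.sq_norm (ψ i)
        nlinarith [norm_nonneg (ψ i)]
      have hcompact : IsCompact S :=
        (Metric.isCompact_of_isClosed_isBounded hclosed
          ((Metric.isBounded_closedBall (x := (0 : Fin n → ℂ)) (r := 1)).subset hbound))
      have hfc : Continuous f := by
        have hg : Continuous fun ψ : Fin n → ℂ => star ψ ⬝ᵥ W.mulVec ψ := by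
          simp only [dotProduct, mulVec, Pi.star_apply]
          fun_prop
        exact continuous_norm.comp hg
      obtain ⟨α, hαS, hmin⟩ := hcompact.exists_isMinOn hSne hfc.continuousOn
      by_cases hm : f α = 0
      · refine ⟨α, hαS, ?_⟩
        rw [orth_key]
        rw [hf] at hm
        simpa using hm
      · exfalso
        have hm0 : 0 < f α := lt_of_le_of_ne (norm_nonneg _) (Ne.symm hm)
        have hub : dU U V ≤ Real.sqrt (1 - f α ^ 2) := by
          refine ciSup_le fun ψ => ?_
          rw [hdpsi]
          refine Real.sqrt_le_sqrt ?_
          have : f α ≤ f ψ.1 := hmin ψ.2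
          nlinarith [norm_nonneg (star ψ.1 ⬝ᵥ W.mulVec ψ.1)]
        have hlt : Real.sqrt (1 - f α ^ 2) < 1 := by
          rcases le_or_gt (1 - f α ^ 2) 0 with h | h
          · rw [Real.sqrt_eq_zero'.mpr h]; norm_num
          · have h2 : Real.sqrt (1 - f α ^ 2) < Real.sqrt 1 :=
              Real.sqrt_lt_sqrt h.le (by nlinarith)
            simpa using h2
        rw [h1] at hub
        exact absurd (lt_of_le_of_lt hub hlt) (lt_irrefl 1)
    · exfalso
      have hie : IsEmpty {ψ : Fin n → ℂ // star ψ ⬝ᵥ ψ = 1} := not_nonempty_iff.mp hne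
      have : dU U V = 0 := by
        unfold dU
        exact Real.iSup_of_isEmpty _
      rw [h1] at this
      norm_num at this
  · rintro ⟨α, hα, horth⟩
    have h1 : dpsi α U V = 1 := by
      rw [hdpsi]
      have : f α = 0 := by
        rw [hf]
        simp only
        rw [← orth_key, horth]
        simp
      rw [this]
      simp
    refine le_antisymm (Real.iSup_le (fun ψ => dpsi_le_one _ _ _) zero_le_one) ?_
    calc (1:ℝ) = dpsi α U V := h1.symm
      _ ≤ dU U V := le_ciSup hbdd ⟨α, hα⟩
end

section
/- Let W be a unitary operator on ℂⁿ whose eigenvalues are e^{iθ₁}, …, e^{iθₙ} with 0 = θ₁ ≤ θ₂ ≤ … ≤ θₙ < π (all eigenvalues contained in the open upper half-plane arc of angular width θₙ < π starting at 1). Then d(I, W) = sin(θₙ/2), where d(I,W) = sup_{‖ψ‖=1} (1 − |⟨ψ|W|ψ⟩|²)^{1/2}. -/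
open Matrix

section aux

variable {n : ℕ}

/-- Sum over a two-point indicator. -/
lemma my_sum_ite_pair {k : Type*} [Fintype k] [DecidableEq k] (a b : k) (hab : a ≠ b)
    (g : k → ℂ) :
    ∑ j, (if j = a ∨ j = b then g j else 0) = g a + g b := by
  have h : ∀ j, (if j = a ∨ j = b then g j else 0)
      = (if j = a then g j else 0) + (if j = b then g j else 0) := by
    intro j
    by_cases h1 : j = a <;> by_cases h2 : j = b <;>
      simp_all
  simp_rw [h, Finset.sum_add_distrib]
  rw [Finset.sum_ite_eq' Finset.univ a g, Finset.sum_ite_eq' Finset.univ b g]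
  simp

/-- the quadratic form in the eigenbasis -/
lemma my_key (P : Matrix (Fin (n + 1)) (Fin (n + 1)) ℂ)
    (θ : Fin (n + 1) → ℝ) (ψ : Fin (n + 1) → ℂ) :
    star ψ ⬝ᵥ (P * Matrix.diagonal (fun i => Complex.exp (θ i * Complex.I)) * Pᴴ).mulVec ψ
      = ∑ j, (Complex.normSq ((Pᴴ.mulVec ψ) j) : ℂ) * Complex.exp (θ j * Complex.I) := by
  set c := Pᴴ.mulVec ψ with hc
  have h1 : (P * Matrix.diagonal (fun i => Complex.exp (θ i * Complex.I)) * Pᴴ).mulVec ψ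
      = P.mulVec ((Matrix.diagonal (fun i => Complex.exp (θ i * Complex.I))).mulVec c) := by
    rw [hc, mulVec_mulVec, mulVec_mulVec, Matrix.mul_assoc]
  rw [h1, dotProduct_mulVec]
  have h2 : star ψ ᵥ* P = star c := by
    rw [hc, star_mulVec, conjTranspose_conjTranspose]
  rw [h2]
  simp only [dotProduct, mulVec_diagonal, Pi.star_apply]
  congr 1
  funext j
  calc star (c j) * (Complex.exp (θ j * Complex.I) * c j)
      = ((starRingEnd ℂ) (c j) * c j) * Complex.exp (θ j * Complex.I) := by
        rw [Complex.star_def]; ring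
    _ = (Complex.normSq (c j) : ℂ) * Complex.exp (θ j * Complex.I) := by
        rw [← Complex.normSq_eq_conj_mul_self]

lemma my_norm_c (P : Matrix (Fin (n + 1)) (Fin (n + 1)) ℂ)
    (hP : P ∈ Matrix.unitaryGroup (Fin (n + 1)) ℂ)
    (ψ : Fin (n + 1) → ℂ) (hψ : star ψ ⬝ᵥ ψ = 1) :
    ∑ j, Complex.normSq ((Pᴴ.mulVec ψ) j) = 1 := by
  have hPP : P * Pᴴ = 1 := by exact hP.2
  have h1 : star (Pᴴ.mulVec ψ) ⬝ᵥ (Pᴴ.mulVec ψ) = 1 := by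
    rw [star_mulVec, conjTranspose_conjTranspose, ← dotProduct_mulVec, mulVec_mulVec, hPP,
      one_mulVec, hψ]
  have h2 : star (Pᴴ.mulVec ψ) ⬝ᵥ (Pᴴ.mulVec ψ)
      = ((∑ j, Complex.normSq ((Pᴴ.mulVec ψ) j) : ℝ) : ℂ) := by
    simp only [dotProduct, Pi.star_apply, Complex.ofReal_sum]
    congr 1
    funext j
    rw [Complex.star_def, ← Complex.normSq_eq_conj_mul_self]
  rw [h2] at h1
  exact_mod_cast h1

/-- the main lower bound on the modulus of a convex combination -/
lemma my_abs_lower (θ : Fin (n + 1) → ℝ) (hmono : Monotone θ) (hθ0 : θ 0 = 0)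
    (hθlt : θ (Fin.last n) < Real.pi) (p : Fin (n + 1) → ℝ) (hp : ∀ j, 0 ≤ p j)
    (hsum : ∑ j, p j = 1) :
    Real.cos (θ (Fin.last n) / 2) ≤
      ‖∑ j, (p j : ℂ) * Complex.exp (θ j * Complex.I)‖ := by
  set φ := θ (Fin.last n) / 2 with hφ
  set z := ∑ j, (p j : ℂ) * Complex.exp (θ j * Complex.I) with hz
  have hφ0 : 0 ≤ φ := by
    have : 0 ≤ θ (Fin.last n) := hθ0 ▸ hmono (Fin.zero_le _)
    positivity
  have hre : (Complex.exp ((-φ : ℝ) * Complex.I) * z).re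
      = ∑ j, p j * Real.cos (θ j - φ) := by
    rw [hz, Finset.mul_sum, Complex.re_sum]
    congr 1
    funext j
    have : Complex.exp ((-φ : ℝ) * Complex.I) * ((p j : ℂ) * Complex.exp (θ j * Complex.I))
        = (p j : ℂ) * Complex.exp (((θ j - φ : ℝ) : ℂ) * Complex.I) := by
      calc Complex.exp ((-φ : ℝ) * Complex.I) * ((p j : ℂ) * Complex.exp (θ j * Complex.I))
          = (p j : ℂ) * (Complex.exp ((-φ : ℝ) * Complex.I) * Complex.exp (θ j * Complex.I)) := by
            ring
        _ = (p j : ℂ) * Complex.exp (((-φ : ℝ) : ℂ) * Complex.I + ((θ j : ℝ) : ℂ) * Complex.I) := by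
            rw [Complex.exp_add]
        _ = (p j : ℂ) * Complex.exp (((θ j - φ : ℝ) : ℂ) * Complex.I) := by
            push_cast; ring_nf
    rw [this]
    rw [Complex.re_ofReal_mul, Complex.exp_ofReal_mul_I_re]
  have hterm : ∀ j, p j * Real.cos φ ≤ p j * Real.cos (θ j - φ) := by
    intro j
    apply mul_le_mul_of_nonneg_left _ (hp j)
    have h1 : 0 ≤ θ j := hθ0 ▸ hmono (Fin.zero_le _)
    have h2 : θ j ≤ 2 * φ := by
      rw [hφ]; have := hmono (Fin.le_last j); linarith
    have habs : |θ j - φ| ≤ φ := by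
      rw [abs_le]; constructor <;> linarith
    calc Real.cos φ ≤ Real.cos |θ j - φ| := by
          apply Real.cos_le_cos_of_nonneg_of_le_pi (abs_nonneg _) _ habs
          linarith
      _ = Real.cos (θ j - φ) := Real.cos_abs _
  calc Real.cos φ = ∑ j, p j * Real.cos φ := by rw [← Finset.sum_mul, hsum, one_mul]
    _ ≤ ∑ j, p j * Real.cos (θ j - φ) := Finset.sum_le_sum (fun j _ => hterm j)
    _ = (Complex.exp ((-φ : ℝ) * Complex.I) * z).re := hre.symm
    _ ≤ ‖Complex.exp ((-φ : ℝ) * Complex.I) * z‖ := Complex.re_le_norm _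
    _ = ‖z‖ := by rw [norm_mul, Complex.norm_exp_ofReal_mul_I, one_mul]

end aux

theorem dU_one_eq_sin_half {n : ℕ} (W : Matrix (Fin (n + 1)) (Fin (n + 1)) ℂ)
    (P : Matrix (Fin (n + 1)) (Fin (n + 1)) ℂ)
    (hP : P ∈ Matrix.unitaryGroup (Fin (n + 1)) ℂ)
    (θ : Fin (n + 1) → ℝ) (hmono : Monotone θ) (hθ0 : θ 0 = 0)
    (hθlt : θ (Fin.last n) < Real.pi)
    (hW : W = P * Matrix.diagonal (fun i => Complex.exp (θ i * Complex.I)) * Pᴴ) :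
    dU 1 W = Real.sin (θ (Fin.last n) / 2) := by
  have hPP : P * Pᴴ = 1 := by exact hP.2
  have hPP' : Pᴴ * P = 1 := by exact hP.1
  set φ := θ (Fin.last n) / 2 with hφdef
  have hθlast0 : 0 ≤ θ (Fin.last n) := hθ0 ▸ hmono (Fin.zero_le _)
  have hφ0 : 0 ≤ φ := by positivity
  have hφπ : φ < Real.pi / 2 := by rw [hφdef]; linarith
  have hsinφ : 0 ≤ Real.sin φ := Real.sin_nonneg_of_nonneg_of_le_pi hφ0 (by linarith [Real.pi_pos])
  have hcosφ : 0 ≤ Real.cos φ := Real.cos_nonneg_of_mem_Icc ⟨by linarith [Real.pi_pos], le_of_lt hφπ⟩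
  -- rewrite dpsi
  have hdpsi : ∀ ψ : Fin (n + 1) → ℂ,
      dpsi ψ 1 W = Real.sqrt (1 - ‖
        (∑ j, (Complex.normSq ((Pᴴ.mulVec ψ) j) : ℂ) * Complex.exp (θ j * Complex.I))‖ ^ 2) := by
    intro ψ
    rw [dpsi, conjTranspose_one, one_mul, hW, my_key]
  -- upper bound
  have upper : ∀ ψ : Fin (n + 1) → ℂ, star ψ ⬝ᵥ ψ = 1 → dpsi ψ 1 W ≤ Real.sin φ := by
    intro ψ hψ
    rw [hdpsi]
    have hsum := my_norm_c P hP ψ hψ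
    have hlow := my_abs_lower θ hmono hθ0 hθlt (fun j => Complex.normSq ((Pᴴ.mulVec ψ) j))
      (fun j => Complex.normSq_nonneg _) hsum
    have h1 : Real.cos φ ^ 2 ≤ ‖
        (∑ j, (Complex.normSq ((Pᴴ.mulVec ψ) j) : ℂ) * Complex.exp (θ j * Complex.I))‖ ^ 2 := by
      apply pow_le_pow_left₀ hcosφ hlow
    have h2 : (1 : ℝ) - _ ≤ 1 - Real.cos φ ^ 2 := sub_le_sub_left h1 1
    calc Real.sqrt _ ≤ Real.sqrt (1 - Real.cos φ ^ 2) := Real.sqrt_le_sqrt h2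
      _ = Real.sqrt (Real.sin φ ^ 2) := by rw [Real.sin_sq]
      _ = Real.sin φ := by rw [Real.sqrt_sq hsinφ]
  -- attainment
  have attain : ∃ ψ : Fin (n + 1) → ℂ, star ψ ⬝ᵥ ψ = 1 ∧ dpsi ψ 1 W = Real.sin φ := by
    by_cases h0 : Fin.last n = 0
    · -- θ last = 0, any eigenvector works
      have hθl : θ (Fin.last n) = 0 := by rw [h0, hθ0]
      refine ⟨P.mulVec (Pi.single 0 1), ?_, ?_⟩
      · rw [star_mulVec, ← dotProduct_mulVec, mulVec_mulVec, hPP', one_mulVec]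
        simp [dotProduct, Pi.single_apply, apply_ite]
      · have hc : Pᴴ.mulVec (P.mulVec (Pi.single 0 1)) = Pi.single 0 1 := by
          rw [mulVec_mulVec, hPP', one_mulVec]
        rw [hdpsi, hc]
        have : ∑ j, (Complex.normSq ((Pi.single 0 1 : Fin (n+1) → ℂ) j) : ℂ)
            * Complex.exp (θ j * Complex.I) = Complex.exp (θ 0 * Complex.I) := by
          simp [Pi.single_apply, apply_ite Complex.normSq, apply_ite (Complex.ofReal),
            ite_mul, Finset.sum_ite_eq']
        rw [this, hθ0]
        simp [hφdef, hθl]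
    · -- the midpoint vector
      set r : ℂ := (((Real.sqrt 2)⁻¹ : ℝ) : ℂ) with hr
      set c : Fin (n + 1) → ℂ := fun j => if j = 0 ∨ j = Fin.last n then r else 0 with hcdef
      have h0' : (0 : Fin (n + 1)) ≠ Fin.last n := fun h => h0 h.symm
      have hnsq : Complex.normSq r = 1 / 2 := by
        rw [hr, Complex.normSq_ofReal, ← mul_inv, Real.mul_self_sqrt (by norm_num : (0:ℝ) ≤ 2)]
        norm_num
      have hcc : star c ⬝ᵥ c = 1 := by
        simp only [dotProduct, Pi.star_apply, hcdef]
        have : ∀ j : Fin (n+1), star (if j = 0 ∨ j = Fin.last n then r else 0)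
            * (if j = 0 ∨ j = Fin.last n then r else 0)
            = (if j = 0 ∨ j = Fin.last n then (Complex.normSq r : ℂ) else 0) := by
          intro j
          by_cases h : j = 0 ∨ j = Fin.last n <;>
            simp [h, ← Complex.normSq_eq_conj_mul_self]
        simp_rw [this]
        rw [my_sum_ite_pair _ _ h0' (fun _ => (Complex.normSq r : ℂ)), hnsq]
        norm_num
      refine ⟨P.mulVec c, ?_, ?_⟩
      · rw [star_mulVec, ← dotProduct_mulVec, mulVec_mulVec, hPP', one_mulVec, hcc]
      · have hc : Pᴴ.mulVec (P.mulVec c) = c := by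
          rw [mulVec_mulVec, hPP', one_mulVec]
        rw [hdpsi, hc]
        have hns : ∀ j, (Complex.normSq (c j) : ℂ)
            = if j = 0 ∨ j = Fin.last n then ((1:ℂ)/2) else 0 := by
          intro j
          by_cases h : j = 0 ∨ j = Fin.last n <;> simp [hcdef, h, hnsq]
        have hsum : ∑ j, (Complex.normSq (c j) : ℂ) * Complex.exp (θ j * Complex.I)
            = (1 + Complex.exp (θ (Fin.last n) * Complex.I)) / 2 := by
          have : ∀ j, (Complex.normSq (c j) : ℂ) * Complex.exp (θ j * Complex.I)
              = if j = 0 ∨ j = Fin.last n then Complex.exp (θ j * Complex.I) / 2 else 0 := by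
            intro j
            rw [hns j]
            by_cases h : j = 0 ∨ j = Fin.last n <;> simp [h] <;> ring
          simp_rw [this]
          rw [my_sum_ite_pair _ _ h0' (fun j => Complex.exp (θ j * Complex.I) / 2), hθ0]
          rw [show ((0:ℝ):ℂ) * Complex.I = 0 by simp, Complex.exp_zero]
          ring
        rw [hsum]
        -- compute modulus
        have habs : ‖(1 + Complex.exp (θ (Fin.last n) * Complex.I)) / 2‖ ^ 2
            = Real.cos φ ^ 2 := by
          rw [Complex.sq_norm]
          have hexp : Complex.exp ((θ (Fin.last n) : ℂ) * Complex.I)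
              = Complex.ofReal (Real.cos (θ (Fin.last n)))
                + Complex.ofReal (Real.sin (θ (Fin.last n))) * Complex.I := by
            rw [Complex.exp_mul_I, ← Complex.ofReal_cos, ← Complex.ofReal_sin]
          rw [hexp]
          have : (1 + ((Real.cos (θ (Fin.last n)) : ℂ)
              + (Real.sin (θ (Fin.last n)) : ℂ) * Complex.I)) / 2
              = Complex.mk ((1 + Real.cos (θ (Fin.last n))) / 2) (Real.sin (θ (Fin.last n)) / 2) := by
            apply Complex.ext <;> simp [Complex.cos_ofReal_re, Complex.sin_ofReal_re] <;> ring
          rw [this, Complex.normSq_mk]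
          have hc2 : Real.cos φ ^ 2 = (1 + Real.cos (θ (Fin.last n))) / 2 := by
            rw [hφdef, Real.cos_sq]
            rw [mul_div_cancel₀ _ (two_ne_zero)]
            ring
          rw [hc2]
          nlinarith [Real.sin_sq_add_cos_sq (θ (Fin.last n))]
        rw [habs]
        rw [← Real.sin_sq]
        exact Real.sqrt_sq hsinφ
  -- combine
  obtain ⟨ψ₀, hψ₀, hdψ₀⟩ := attain
  have hne : Nonempty {ψ : Fin (n+1) → ℂ // star ψ ⬝ᵥ ψ = 1} := ⟨⟨ψ₀, hψ₀⟩⟩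
  apply le_antisymm
  · exact ciSup_le (fun ψ => upper ψ.1 ψ.2)
  · rw [← hdψ₀]
    have hbdd : BddAbove (Set.range
        (fun ψ : {ψ : Fin (n+1) → ℂ // star ψ ⬝ᵥ ψ = 1} => dpsi ψ.1 1 W)) := by
      refine ⟨Real.sin φ, ?_⟩
      rintro x ⟨ψ, rfl⟩
      exact upper ψ.1 ψ.2
    exact le_ciSup hbdd ⟨ψ₀, hψ₀⟩
end

section
/- Let U be a unitary operator on ℂᵐ⊗ℂⁿ such that for every pair of unit vectors α ∈ ℂᵐ, β ∈ ℂⁿ the product vector α⊗β is an eigenvector of U. Then U is a scalar multiple of the identity: U = aI for some complex a with |a| = 1. -/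
open Matrix

theorem unitary_scalar_of_product_eigenvectors {m n : ℕ}
    (U : Matrix (Fin m × Fin n) (Fin m × Fin n) ℂ)
    (hU : U ∈ Matrix.unitaryGroup (Fin m × Fin n) ℂ)
    (h : ∀ (α : Fin m → ℂ) (β : Fin n → ℂ), star α ⬝ᵥ α = 1 → star β ⬝ᵥ β = 1 →
      ∃ c : ℂ, U.mulVec (fun p => α p.1 * β p.2) = c • fun p => α p.1 * β p.2) :
    ∃ a : ℂ, ‖a‖ = 1 ∧ U = a • (1 : Matrix (Fin m × Fin n) (Fin m × Fin n) ℂ) := by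
  rcases Nat.eq_zero_or_pos m with hm | hm
  · subst hm
    exact ⟨1, by simp, by ext p q; exact p.1.elim0⟩
  rcases Nat.eq_zero_or_pos n with hn | hn
  · subst hn
    exact ⟨1, by simp, by ext p q; exact p.2.elim0⟩
  -- single vectors are unit vectors
  have hnorm : ∀ {N : ℕ} (i : Fin N), star (Pi.single i (1:ℂ)) ⬝ᵥ Pi.single i 1 = 1 := by
    intro N i
    simp [dotProduct, Pi.single_apply, apply_ite]
  -- columns of U
  have hcol : ∀ k : Fin m × Fin n, ∃ c : ℂ, ∀ p, U p k = c * (if p = k then (1:ℂ) else 0) := by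
    intro k
    obtain ⟨c, hc⟩ := h (Pi.single k.1 1) (Pi.single k.2 1) (hnorm k.1) (hnorm k.2)
    have hv : (fun p : Fin m × Fin n => (Pi.single k.1 (1:ℂ) : Fin m → ℂ) p.1 * (Pi.single k.2 (1:ℂ) : Fin n → ℂ) p.2)
        = Pi.single k (1:ℂ) := by
      funext p
      by_cases h1 : p.1 = k.1 <;> by_cases h2 : p.2 = k.2 <;>
        simp [Pi.single_apply, h1, h2, Prod.ext_iff]
    rw [hv, Matrix.mulVec_single] at hc
    refine ⟨c, fun p => ?_⟩
    have := congrFun hc p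
    simpa [Pi.single_apply, eq_comm] using this
  choose c hc using hcol
  have hdiag : U = Matrix.diagonal c := by
    ext p q
    rw [hc]
    by_cases hpq : p = q <;> simp [Matrix.diagonal_apply, hpq]
  -- helper: two-point superposition is a unit vector
  set r : ℂ := Complex.ofReal (Real.sqrt 2)⁻¹ with hr
  have hr2 : r * r = 2⁻¹ := by
    rw [hr, ← Complex.ofReal_mul, ← Real.sqrt_inv, Real.mul_self_sqrt (by norm_num)]
    norm_num
  have hcr : (starRingEnd ℂ) r = r := by rw [hr]; exact Complex.conj_ofReal _
  have hrne : r ≠ 0 := by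
    rw [hr]
    norm_cast
    positivity
  have hsup : ∀ {N : ℕ} (i i' : Fin N), i ≠ i' →
      star (fun x => if x = i ∨ x = i' then r else 0) ⬝ᵥ (fun x => if x = i ∨ x = i' then r else 0) = 1 := by
    intro N i i' hne
    have key : ∀ x : Fin N,
        star (if x = i ∨ x = i' then r else 0) * (if x = i ∨ x = i' then r else 0)
        = (if x = i then (2⁻¹ : ℂ) else 0) + (if x = i' then (2⁻¹ : ℂ) else 0) := by
      intro x
      by_cases h1 : x = i <;> by_cases h2 : x = i' <;>
        simp [h1, h2, hne, Ne.symm hne, hcr, hr2]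
    simp only [dotProduct, Pi.star_apply]
    rw [Finset.sum_congr rfl (fun x _ => key x), Finset.sum_add_distrib]
    simp only [Finset.sum_ite_eq', Finset.mem_univ, if_true]
    norm_num
  -- rows equal within a column
  have hrow : ∀ (i i' : Fin m) (j : Fin n), c (i, j) = c (i', j) := by
    intro i i' j
    by_cases hii : i = i'
    · rw [hii]
    obtain ⟨c0, hc0⟩ := h (fun x => if x = i ∨ x = i' then r else 0) (Pi.single j 1)
      (hsup i i' hii) (hnorm j)
    rw [hdiag] at hc0
    have e1 := congrFun hc0 (i, j)
    have e2 := congrFun hc0 (i', j)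
    simp [Matrix.mulVec_diagonal, Pi.single_apply] at e1 e2
    have g1 : c (i, j) * r = c0 * r := by simpa using e1
    have g2 : c (i', j) * r = c0 * r := by simpa using e2
    rw [mul_right_cancel₀ hrne g1, mul_right_cancel₀ hrne g2]
  -- columns equal within a row
  have hcolu : ∀ (i : Fin m) (j j' : Fin n), c (i, j) = c (i, j') := by
    intro i j j'
    by_cases hjj : j = j'
    · rw [hjj]
    obtain ⟨c0, hc0⟩ := h (Pi.single i 1) (fun x => if x = j ∨ x = j' then r else 0)
      (hnorm i) (hsup j j' hjj)
    rw [hdiag] at hc0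
    have e1 := congrFun hc0 (i, j)
    have e2 := congrFun hc0 (i, j')
    simp [Matrix.mulVec_diagonal, Pi.single_apply] at e1 e2
    have g1 : c (i, j) * r = c0 * r := by simpa using e1
    have g2 : c (i, j') * r = c0 * r := by simpa using e2
    rw [mul_right_cancel₀ hrne g1, mul_right_cancel₀ hrne g2]
  set k0 : Fin m × Fin n := (⟨0, hm⟩, ⟨0, hn⟩) with hk0
  set a : ℂ := c k0 with ha
  have hall : ∀ k, c k = a := by
    intro k
    rw [ha, hk0]
    exact (hcolu k.1 k.2 ⟨0, hn⟩).trans (hrow k.1 ⟨0, hm⟩ ⟨0, hn⟩)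
  have hone : (starRingEnd ℂ) a * a = 1 := by
    have h1 : star U * U = 1 := hU.1
    rw [hdiag, Matrix.star_eq_conjTranspose, Matrix.diagonal_conjTranspose,
      Matrix.diagonal_mul_diagonal] at h1
    have := congrFun (congrFun h1 k0) k0
    simpa [Matrix.diagonal_apply, Matrix.one_apply, ha] using this
  have hn2 : Complex.normSq a = 1 := by
    have h2 := Complex.normSq_eq_conj_mul_self (z := a)
    rw [hone] at h2
    exact_mod_cast h2
  refine ⟨a, by rw [Complex.norm_def, hn2, Real.sqrt_one], ?_⟩
  rw [hdiag]
  ext p q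
  by_cases hpq : p = q <;>
    simp [Matrix.diagonal_apply, Matrix.one_apply, Matrix.smul_apply, hall, hpq]
end
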